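/- arXiv:1906.03726 — 4 statements merged into one kernel-verified Lean document; each statement's English description precedes it below -/
import Mathlib

section
/- Let (E,τ) be a topological space and k a kernel on E whose RKHS is H. If k is continuous at the diagonal, i.e., lim_{y→x} k(x,y) = lim_{y→x} k(y,y) = k(x,x) for all x ∈ E, then every h ∈ H is continuous. -/
open scoped InnerProductSpace

/-- If the kernel `k` of an RKHS `H` on a topological space `E` is continuous at
the diagonal, i.e. `lim_{y→x} k(x,y) = lim_{y→x} k(y,y) = k(x,x)` for all `x`, then every
`h ∈ H` (whose evaluation is `x ↦ ⟪h, K x⟫`) is continuous. -/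
theorem stmt_3 {E H : Type*} [TopologicalSpace E]
    [NormedAddCommGroup H] [InnerProductSpace ℝ H]
    (k : E → E → ℝ) (K : E → H)
    (hk : ∀ x y : E, k x y = ⟪K x, K y⟫_ℝ)
    (hdiag : ∀ x : E,
      Filter.Tendsto (fun y => k x y) (nhds x) (nhds (k x x)) ∧
      Filter.Tendsto (fun y => k y y) (nhds x) (nhds (k x x)))
    (h : H) :
    Continuous fun x => ⟪h, K x⟫_ℝ := by
  rw [continuous_iff_continuousAt]
  intro x
  have hKcont : Filter.Tendsto K (nhds x) (nhds (K x)) := by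
    have hsq : Filter.Tendsto (fun y => ‖K y - K x‖ ^ 2) (nhds x) (nhds 0) := by
      have heq : ∀ y, ‖K y - K x‖ ^ 2 = k y y - 2 * k x y + k x x := by
        intro y
        rw [@norm_sub_sq_real, hk, hk, hk, real_inner_comm, real_inner_self_eq_norm_sq,
          real_inner_self_eq_norm_sq]
      have : Filter.Tendsto (fun y => k y y - 2 * k x y + k x x) (nhds x)
          (nhds (k x x - 2 * k x x + k x x)) := by
        exact (((hdiag x).2.sub ((hdiag x).1.const_mul 2)).add tendsto_const_nhds)
      simp only [heq]
      convert this using 2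
      ring
    have hnorm : Filter.Tendsto (fun y => ‖K y - K x‖) (nhds x) (nhds 0) := by
      have := hsq.sqrt
      simp only [Real.sqrt_sq (norm_nonneg _), Real.sqrt_zero] at this
      exact this
    rw [tendsto_iff_norm_sub_tendsto_zero]
    exact hnorm
  exact Filter.Tendsto.inner tendsto_const_nhds hKcont
end

section
/- Let J : H → L²(μ) be a compact operator, f ∈ L²(μ), f₀ the orthogonal projection of f onto the closure of the image of J, and f_λ = J(J*J + λ)⁻¹J*f for λ > 0. Then ‖f₀ − f_λ‖_{L²(μ)} → 0 as λ → 0⁺. -/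
open scoped InnerProductSpace
open MeasureTheory

open ContinuousLinearMap in
/-- Auxiliary: the two key quantitative estimates for the Tikhonov regularization. -/
lemma stmt_12_aux {H F : Type*} [NormedAddCommGroup H] [InnerProductSpace ℝ H] [CompleteSpace H]
    [NormedAddCommGroup F] [InnerProductSpace ℝ F] [CompleteSpace F]
    (J : H →L[ℝ] F) {lam : ℝ} (hlam : 0 < lam) (b : H →L[ℝ] H)
    (hb1 : (((adjoint J).comp J) + lam • (1 : H →L[ℝ] H)).comp b = 1)
    (hb2 : b.comp (((adjoint J).comp J) + lam • (1 : H →L[ℝ] H)) = 1) :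
    (∀ g : F, ‖g - J (b (adjoint J g))‖ ≤ ‖g‖) ∧
    (∀ h : H, ‖J h - J (b (adjoint J (J h)))‖ ≤ Real.sqrt lam * ‖h‖) := by
  -- pointwise versions of the resolvent identities
  have heq1 : ∀ u : H, (adjoint J) (J (b u)) + lam • b u = u := by
    intro u
    have := ContinuousLinearMap.ext_iff.mp hb1 u
    simpa [ContinuousLinearMap.comp_apply, ContinuousLinearMap.add_apply,
      ContinuousLinearMap.smul_apply, ContinuousLinearMap.one_apply] using this
  have heq2 : ∀ x : H, b ((adjoint J) (J x)) + lam • b x = x := by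
    intro x
    have := ContinuousLinearMap.ext_iff.mp hb2 x
    simpa [ContinuousLinearMap.comp_apply, ContinuousLinearMap.add_apply,
      ContinuousLinearMap.smul_apply, ContinuousLinearMap.one_apply, map_add,
      _root_.map_smul] using this
  -- the basic inner-product identity
  have hinner : ∀ u : H, ⟪b u, u⟫_ℝ = ‖J (b u)‖ ^ 2 + lam * ‖b u‖ ^ 2 := by
    intro u
    have h : ⟪b u, u⟫_ℝ = ⟪b u, (adjoint J) (J (b u)) + lam • b u⟫_ℝ := by rw [heq1 u]
    rw [h, inner_add_right, real_inner_smul_right, ContinuousLinearMap.adjoint_inner_right,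
      real_inner_self_eq_norm_sq, real_inner_self_eq_norm_sq]
  have hinner_nonneg : ∀ u : H, 0 ≤ ⟪b u, u⟫_ℝ := by
    intro u
    rw [hinner u]
    positivity
  constructor
  · -- contraction estimate
    intro g
    set u := adjoint J g with hu
    have h1 : ⟪g, J (b u)⟫_ℝ = ⟪b u, u⟫_ℝ := by
      rw [← ContinuousLinearMap.adjoint_inner_left, ← hu, real_inner_comm]
    have h2 : ‖g - J (b u)‖ ^ 2 = ‖g‖ ^ 2 - 2 * ⟪b u, u⟫_ℝ + ‖J (b u)‖ ^ 2 := by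
      rw [@norm_sub_sq_real, h1]
    have h3 : ‖J (b u)‖ ^ 2 ≤ ⟪b u, u⟫_ℝ := by
      rw [hinner u]; nlinarith [sq_nonneg ‖b u‖]
    have hsq : ‖g - J (b u)‖ ^ 2 ≤ ‖g‖ ^ 2 := by
      rw [h2]; nlinarith [hinner_nonneg u]
    have := Real.sqrt_le_sqrt hsq
    rwa [Real.sqrt_sq (norm_nonneg _), Real.sqrt_sq (norm_nonneg _)] at this
  · -- √λ estimate on the range of J
    intro h
    have e1 : J h - J (b (adjoint J (J h))) = lam • J (b h) := by
      have e : h - b ((adjoint J) (J h)) = lam • b h :=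
        (eq_sub_of_add_eq' (heq2 h)).symm
      calc J h - J (b (adjoint J (J h))) = J (h - b ((adjoint J) (J h))) := by rw [map_sub]
        _ = J (lam • b h) := by rw [e]
        _ = lam • J (b h) := by rw [_root_.map_smul]
    rw [e1]
    have hCS : ⟪b h, h⟫_ℝ ≤ ‖b h‖ * ‖h‖ := real_inner_le_norm _ _
    have hkey := hinner h
    -- from ‖J(bh)‖² + λ‖bh‖² ≤ ‖bh‖‖h‖ we get λ‖J(bh)‖² ≤ ‖h‖²/4 ≤ ‖h‖²
    have hsq : ‖lam • J (b h)‖ ^ 2 ≤ (Real.sqrt lam * ‖h‖) ^ 2 := by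
      rw [norm_smul, Real.norm_eq_abs, abs_of_pos hlam, mul_pow, mul_pow,
        Real.sq_sqrt hlam.le]
      nlinarith [sq_nonneg (lam * ‖b h‖ - ‖h‖ / 2), norm_nonneg (J (b h)), hlam,
        sq_nonneg ‖J (b h)‖]
    have h4 : 0 ≤ Real.sqrt lam * ‖h‖ := by positivity
    have := Real.sqrt_le_sqrt hsq
    rwa [Real.sqrt_sq (norm_nonneg _), Real.sqrt_sq h4] at this

/-- For compact `J : H → L²(μ)`, `f ∈ L²(μ)`, `f₀` the orthogonal projection of
`f` onto `cl(Im J)` and `f_λ = J(J*J + λ)⁻¹ J*f`, one has `‖f₀ − f_λ‖ → 0` as `λ → 0⁺`. -/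
theorem stmt_12 {E H : Type*} [MeasurableSpace E]
    [NormedAddCommGroup H] [InnerProductSpace ℝ H] [CompleteSpace H]
    (μ : Measure E)
    (J : H →L[ℝ] Lp ℝ 2 μ) (hJ : IsCompactOperator J)
    (f f₀ : Lp ℝ 2 μ)
    (hmem : f₀ ∈ closure (LinearMap.range (J : H →ₗ[ℝ] Lp ℝ 2 μ) : Set (Lp ℝ 2 μ)))
    (horth : ∀ h : H, ⟪f - f₀, J h⟫_ℝ = 0)
    (B : ℝ → H →L[ℝ] H)
    (hB : ∀ lam : ℝ, 0 < lam →
      ((ContinuousLinearMap.adjoint J).comp J + lam • (1 : H →L[ℝ] H)).comp (B lam) = 1 ∧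
      (B lam).comp ((ContinuousLinearMap.adjoint J).comp J + lam • (1 : H →L[ℝ] H)) = 1) :
    Filter.Tendsto (fun lam => ‖f₀ - J (B lam (ContinuousLinearMap.adjoint J f))‖)
      (nhdsWithin 0 (Set.Ioi 0)) (nhds 0) := by
  classical
  set Jad := ContinuousLinearMap.adjoint J with hJad
  -- J* f = J* f₀
  have hJf : Jad f = Jad f₀ := by
    have h0 : Jad (f - f₀) = 0 := by
      have : ⟪Jad (f - f₀), Jad (f - f₀)⟫_ℝ = 0 := by
        rw [hJad, ContinuousLinearMap.adjoint_inner_left]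
        exact horth _
      exact inner_self_eq_zero.mp this
    have h1 := map_sub Jad f f₀
    rw [h0] at h1
    exact sub_eq_zero.mp h1.symm
  rw [Metric.tendsto_nhdsWithin_nhds]
  intro ε hε
  -- approximate f₀ by an element of the range of J
  obtain ⟨y, hy, hyd⟩ := Metric.mem_closure_iff.mp hmem (ε / 2) (by positivity)
  obtain ⟨h0, rfl⟩ := LinearMap.mem_range.mp hy
  refine ⟨(ε / (2 * (‖h0‖ + 1))) ^ 2, by positivity, ?_⟩
  intro lam hlam hd
  have hlam' : (0 : ℝ) < lam := hlam
  have hdl : lam < (ε / (2 * (‖h0‖ + 1))) ^ 2 := by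
    rw [Real.dist_eq, sub_zero, abs_of_pos hlam'] at hd
    exact hd
  obtain ⟨key1, key2⟩ := stmt_12_aux J hlam' (B lam) (hB lam hlam').1 (hB lam hlam').2
  rw [Real.dist_eq, sub_zero, abs_of_nonneg (norm_nonneg _)]
  have e1 : f₀ - J (B lam (Jad f)) =
      ((f₀ - J h0) - J (B lam (Jad (f₀ - J h0)))) + (J h0 - J (B lam (Jad (J h0)))) := by
    rw [hJf]
    simp only [map_sub]
    abel
  calc ‖f₀ - J (B lam (Jad f))‖
      ≤ ‖(f₀ - J h0) - J (B lam (Jad (f₀ - J h0)))‖ + ‖J h0 - J (B lam (Jad (J h0)))‖ := by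
        rw [e1]; exact norm_add_le _ _
    _ ≤ ‖f₀ - J h0‖ + Real.sqrt lam * ‖h0‖ := add_le_add (key1 _) (key2 _)
    _ < ε / 2 + ε / 2 := by
        refine add_lt_add_of_lt_of_le ?_ ?_
        · rw [← dist_eq_norm]; exact hyd
        · have hs : Real.sqrt lam ≤ ε / (2 * (‖h0‖ + 1)) := by
            have := Real.sqrt_le_sqrt hdl.le
            rwa [Real.sqrt_sq (by positivity)] at this
          calc Real.sqrt lam * ‖h0‖ ≤ (ε / (2 * (‖h0‖ + 1))) * ‖h0‖ :=
                mul_le_mul_of_nonneg_right hs (norm_nonneg _)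
            _ ≤ ε / 2 := by
                rw [div_mul_eq_mul_div, div_le_div_iff₀ (by positivity) (by norm_num)]
                nlinarith [norm_nonneg h0, hε]
    _ = ε := by ring
end

section
/- Let J : H → L²(μ) be a compact operator with f₀ ∈ Im J, i.e., f₀ = Jh for some h ∈ H, where f₀ is the projection of f onto cl(Im J), and f_λ = J(J*J+λ)⁻¹J*f. Then ‖f₀ − f_λ‖_{L²(μ)} ≤ (√λ/2) · min{‖h‖_H : h ∈ H, Jh = f₀} for all λ > 0. -/
open scoped InnerProductSpace
open MeasureTheory

private lemma stmt13_aux (lam a b c n : ℝ) (hlam : 0 < lam) (ha : 0 ≤ a) (hn : 0 ≤ n)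
    (hab : a ^ 2 ≤ b * c) (hnh : n ^ 2 = b ^ 2 + 2 * lam * a ^ 2 + lam ^ 2 * c ^ 2) :
    lam * a ≤ Real.sqrt lam / 2 * n := by
  have hsq : (lam * a) ^ 2 ≤ (Real.sqrt lam / 2 * n) ^ 2 := by
    have h2 : (Real.sqrt lam / 2 * n) ^ 2 = lam / 4 * n ^ 2 := by
      rw [mul_pow, div_pow, Real.sq_sqrt hlam.le]; ring
    rw [h2, hnh, mul_pow]
    nlinarith [sq_nonneg (b - lam * c), mul_le_mul_of_nonneg_left hab hlam.le]
  have h3 := Real.sqrt_le_sqrt hsq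
  rwa [Real.sqrt_sq (by positivity), Real.sqrt_sq (by positivity)] at h3

/-- For compact `J : H → L²(μ)`, if the projection `f₀` of `f` onto `cl(Im J)`
lies in `Im J`, then for all `λ > 0`, with `f_λ = J(J*J + λ)⁻¹ J*f`,
`‖f₀ − f_λ‖ ≤ (√λ/2) · min{‖h‖ : Jh = f₀}`. -/
theorem stmt_13 {E H : Type*} [MeasurableSpace E]
    [NormedAddCommGroup H] [InnerProductSpace ℝ H] [CompleteSpace H]
    (μ : Measure E)
    (J : H →L[ℝ] Lp ℝ 2 μ) (hJ : IsCompactOperator J)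
    (f f₀ : Lp ℝ 2 μ)
    (hmem : f₀ ∈ closure (LinearMap.range (J : H →ₗ[ℝ] Lp ℝ 2 μ) : Set (Lp ℝ 2 μ)))
    (horth : ∀ h : H, ⟪f - f₀, J h⟫_ℝ = 0)
    (hex : ∃ h : H, J h = f₀)
    (lam : ℝ) (hlam : 0 < lam)
    (B : H →L[ℝ] H)
    (hB1 : ((ContinuousLinearMap.adjoint J).comp J + lam • (1 : H →L[ℝ] H)).comp B = 1)
    (hB2 : B.comp ((ContinuousLinearMap.adjoint J).comp J + lam • (1 : H →L[ℝ] H)) = 1) :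
    ‖f₀ - J (B (ContinuousLinearMap.adjoint J f))‖ ≤
      Real.sqrt lam / 2 * sInf {r : ℝ | ∃ h : H, J h = f₀ ∧ ‖h‖ = r} := by
  have hc : 0 < Real.sqrt lam / 2 := div_pos (Real.sqrt_pos.mpr hlam) two_pos
  -- J* f = J* f₀
  have hJf : ContinuousLinearMap.adjoint J f = ContinuousLinearMap.adjoint J f₀ := by
    have h0 : ContinuousLinearMap.adjoint J (f - f₀) = 0 := by
      apply ext_inner_right ℝ
      intro x
      rw [ContinuousLinearMap.adjoint_inner_left]
      simpa using horth x
    rw [map_sub, sub_eq_zero] at h0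
    exact h0
  -- key estimate for each h with J h = f₀
  have key : ∀ h : H, J h = f₀ →
      ‖f₀ - J (B (ContinuousLinearMap.adjoint J f))‖ ≤ Real.sqrt lam / 2 * ‖h‖ := by
    intro h hh
    have hBh : B (ContinuousLinearMap.adjoint J (J h)) + lam • B h = h := by
      have h4 := congrArg (fun (A : H →L[ℝ] H) => A h) hB2
      simpa [ContinuousLinearMap.comp_apply, ContinuousLinearMap.add_apply,
        ContinuousLinearMap.smul_apply, map_add] using h4
    have hTg : ContinuousLinearMap.adjoint J (J (B h)) + lam • B h = h := by
      have h5 := congrArg (fun (A : H →L[ℝ] H) => A h) hB1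
      simpa [ContinuousLinearMap.comp_apply, ContinuousLinearMap.add_apply,
        ContinuousLinearMap.smul_apply] using h5
    have heq : f₀ - J (B (ContinuousLinearMap.adjoint J f)) = lam • J (B h) := by
      have hd : h - B (ContinuousLinearMap.adjoint J (J h)) = lam • B h :=
        sub_eq_iff_eq_add'.mpr hBh.symm
      rw [hJf, ← hh, ← map_sub, hd, J.map_smul]
    have hinner : ⟪ContinuousLinearMap.adjoint J (J (B h)), B h⟫_ℝ = ‖J (B h)‖ ^ 2 := by
      rw [ContinuousLinearMap.adjoint_inner_left, real_inner_self_eq_norm_sq]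
    have hab : ‖J (B h)‖ ^ 2 ≤ ‖ContinuousLinearMap.adjoint J (J (B h))‖ * ‖B h‖ := by
      rw [← hinner]
      exact real_inner_le_norm _ _
    have hnh : ‖h‖ ^ 2 = ‖ContinuousLinearMap.adjoint J (J (B h))‖ ^ 2
        + 2 * lam * ‖J (B h)‖ ^ 2 + lam ^ 2 * ‖B h‖ ^ 2 := by
      conv_lhs => rw [← hTg]
      rw [norm_add_sq_real, real_inner_smul_right, hinner, norm_smul,
        Real.norm_eq_abs, abs_of_pos hlam]
      ring
    have h1 : ‖lam • J (B h)‖ = lam * ‖J (B h)‖ := by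
      rw [norm_smul, Real.norm_eq_abs, abs_of_pos hlam]
    rw [heq, h1]
    exact stmt13_aux lam _ _ _ _ hlam (norm_nonneg _) (norm_nonneg _) hab hnh
  obtain ⟨h0, hh0⟩ := hex
  have hne : {r : ℝ | ∃ h : H, J h = f₀ ∧ ‖h‖ = r}.Nonempty := ⟨‖h0‖, h0, hh0, rfl⟩
  have hlow : ‖f₀ - J (B (ContinuousLinearMap.adjoint J f))‖ / (Real.sqrt lam / 2) ≤
      sInf {r : ℝ | ∃ h : H, J h = f₀ ∧ ‖h‖ = r} := by
    apply le_csInf hne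
    rintro r ⟨h, hh, rfl⟩
    rw [div_le_iff₀ hc]
    calc ‖f₀ - J (B (ContinuousLinearMap.adjoint J f))‖ ≤ Real.sqrt lam / 2 * ‖h‖ := key h hh
      _ = ‖h‖ * (Real.sqrt lam / 2) := mul_comm _ _
  have hfin := (div_le_iff₀ hc).mp hlow
  linarith [hfin]
end

section
/- Let μ be a probability measure on E, k a kernel with κ(x) = √(k(x,x)) satisfying 0 < ‖κ‖_{L²(μ)} < ∞, and let w = dμ̃/dμ be the density of an equivalent probability measure μ̃ ∼ μ. Define κ̃(x) = κ(x)/√(w(x)). Then for any p ∈ (2, ∞], ‖κ̃‖_{L^p(μ̃)} ≥ ‖κ‖_{L²(μ)}, with equality if and only if κ > 0 μ-a.s. and w = κ²/‖κ‖²_{L²(μ)} μ-a.s.; in that case κ̃ = ‖κ‖_{L²(μ)} is constant μ-a.s. -/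
open MeasureTheory
open scoped ENNReal NNReal

/-- optimal sampling measure: let `μ` be a probability measure, `κ ≥ 0`
measurable with `0 < ∫ κ² dμ < ∞`, `w > 0` μ-a.s. the density of an equivalent probability
measure `μ̃ = w·μ`, and `κ̃ = κ/√w`. Then for any `p ∈ (2, ∞]`:
`‖κ̃‖_{L^p(μ̃)} ≥ ‖κ‖_{L²(μ)}`, with equality iff `κ > 0` μ-a.s. and
`w = κ²/‖κ‖²_{L²(μ)}` μ-a.s.; in that case `κ̃ = ‖κ‖_{L²(μ)}` is constant μ-a.s. -/
theorem stmt_19 {E : Type*} [MeasurableSpace E] (μ : Measure E) [IsProbabilityMeasure μ]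
    (w κ : E → ℝ) (hw : Measurable w) (hκmeas : Measurable κ)
    (hκnonneg : ∀ x, 0 ≤ κ x)
    (hwpos : ∀ᵐ x ∂μ, 0 < w x)
    (hprob : IsProbabilityMeasure (μ.withDensity fun x => ENNReal.ofReal (w x)))
    (hκL2 : MemLp κ 2 μ) (hκpos : 0 < ∫ x, κ x ^ 2 ∂μ)
    (p : ENNReal) (hp : 2 < p) :
    eLpNorm κ 2 μ ≤
        eLpNorm (fun x => κ x / Real.sqrt (w x)) p
          (μ.withDensity fun x => ENNReal.ofReal (w x)) ∧
      (eLpNorm (fun x => κ x / Real.sqrt (w x)) p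
            (μ.withDensity fun x => ENNReal.ofReal (w x)) = eLpNorm κ 2 μ ↔
        (∀ᵐ x ∂μ, 0 < κ x) ∧ (∀ᵐ x ∂μ, w x = κ x ^ 2 / ∫ z, κ z ^ 2 ∂μ)) ∧
      (((∀ᵐ x ∂μ, 0 < κ x) ∧ (∀ᵐ x ∂μ, w x = κ x ^ 2 / ∫ z, κ z ^ 2 ∂μ)) →
        ∀ᵐ x ∂μ, κ x / Real.sqrt (w x) = Real.sqrt (∫ z, κ z ^ 2 ∂μ)) := by
  haveI := hprob
  set I : ℝ := ∫ x, κ x ^ 2 ∂μ with hIdef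
  set ν : Measure E := μ.withDensity fun x => ENNReal.ofReal (w x) with hνdef
  set f : E → ℝ := fun x => κ x / Real.sqrt (w x) with hfdef
  have hI0 : 0 < I := hκpos
  have hIint : Integrable (fun x => κ x ^ 2) μ := hκL2.integrable_sq
  have hfmeas : Measurable f := hκmeas.div (Real.continuous_sqrt.measurable.comp hw)
  have hf2meas : Measurable fun x => f x ^ 2 := hfmeas.pow_const 2
  have hwe : Measurable fun x => ENNReal.ofReal (w x) := ENNReal.measurable_ofReal.comp hw
  have hfnn : ∀ x, 0 ≤ f x := fun x => div_nonneg (hκnonneg x) (Real.sqrt_nonneg _)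
  have hp0 : p ≠ 0 := by rintro rfl; exact absurd hp (by simp)
  -- transfer of a.e. statements between μ and ν
  have haemp : ∀ {P : E → Prop}, (∀ᵐ x ∂ν, P x) → (∀ᵐ x ∂μ, P x) := by
    intro P h
    rw [hνdef, ae_withDensity_iff hwe] at h
    filter_upwards [h, hwpos] with x hx hw0
    exact hx (by simp [ENNReal.ofReal_eq_zero, not_le, hw0])
  have haepm : ∀ {P : E → Prop}, (∀ᵐ x ∂μ, P x) → (∀ᵐ x ∂ν, P x) := by
    intro P h
    rw [hνdef, ae_withDensity_iff hwe]
    filter_upwards [h] with x hx _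
    exact hx
  -- the main lintegral identity: ∫ f² dν = ∫ κ² dμ
  have hkey : ∀ᵐ x ∂μ, ENNReal.ofReal (w x) * ENNReal.ofReal (f x ^ 2)
      = ENNReal.ofReal (κ x ^ 2) := by
    filter_upwards [hwpos] with x hwx
    rw [← ENNReal.ofReal_mul hwx.le]
    congr 1
    rw [hfdef]
    simp only [div_pow, Real.sq_sqrt hwx.le]
    field_simp
  have hL2ν : ∫⁻ x, ENNReal.ofReal (f x ^ 2) ∂ν = ENNReal.ofReal I := by
    rw [hνdef, lintegral_withDensity_eq_lintegral_mul μ hwe hf2meas.ennreal_ofReal]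
    calc ∫⁻ x, (ENNReal.ofReal (w x) * ENNReal.ofReal (f x ^ 2)) ∂μ
        = ∫⁻ x, ENNReal.ofReal (κ x ^ 2) ∂μ := lintegral_congr_ae hkey
      _ = ENNReal.ofReal I :=
        (ofReal_integral_eq_lintegral_ofReal hIint
          (Filter.Eventually.of_forall fun x => sq_nonneg _)).symm
  -- eLpNorm values at exponent 2
  have hsqnn : (0:ℝ) ≤ Real.sqrt I := Real.sqrt_nonneg _
  have hnorm2 : ∀ (g : E → ℝ), (∀ x, 0 ≤ g x) → ∀ m : Measure E,
      eLpNorm g 2 m = (∫⁻ x, ENNReal.ofReal (g x ^ 2) ∂m) ^ (1/2 : ℝ) := by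
    intro g hg m
    rw [eLpNorm_eq_lintegral_rpow_enorm_toReal two_ne_zero ENNReal.ofNat_ne_top]
    norm_num
    congr 1
    refine lintegral_congr fun x => ?_
    rw [Real.enorm_eq_ofReal (hg x)]
    norm_num
    exact (ENNReal.ofReal_pow (hg x) 2).symm
  have hκ2 : eLpNorm κ 2 μ = ENNReal.ofReal (Real.sqrt I) := by
    rw [hnorm2 κ hκnonneg μ,
      ← ofReal_integral_eq_lintegral_ofReal hIint
        (Filter.Eventually.of_forall fun x => sq_nonneg _),
      ENNReal.ofReal_rpow_of_nonneg hI0.le (by norm_num), Real.sqrt_eq_rpow]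
  have hf2 : eLpNorm f 2 ν = ENNReal.ofReal (Real.sqrt I) := by
    rw [hnorm2 f hfnn ν, hL2ν, ENNReal.ofReal_rpow_of_nonneg hI0.le (by norm_num),
      Real.sqrt_eq_rpow]
  -- part 1: the inequality
  have hineq : eLpNorm κ 2 μ ≤ eLpNorm f p ν := by
    rw [hκ2, ← hf2]
    exact eLpNorm_le_eLpNorm_of_exponent_le hp.le hfmeas.aestronglyMeasurable
  -- part 3
  have hpart3 : ((∀ᵐ x ∂μ, 0 < κ x) ∧ (∀ᵐ x ∂μ, w x = κ x ^ 2 / I)) →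
      ∀ᵐ x ∂μ, f x = Real.sqrt I := by
    rintro ⟨h1, h2⟩
    filter_upwards [h1, h2] with x hx1 hx2
    rw [hfdef]
    simp only
    rw [hx2, Real.sqrt_div (sq_nonneg _), Real.sqrt_sq hx1.le, div_div_eq_mul_div,
      mul_comm, mul_div_assoc, div_self hx1.ne', mul_one]
  -- integrability of f² w.r.t. ν and its integral
  have hf2int : Integrable (fun x => f x ^ 2) ν := by
    refine ⟨hf2meas.aestronglyMeasurable, ?_⟩
    rw [hasFiniteIntegral_iff_ofReal (Filter.Eventually.of_forall fun x => sq_nonneg _), hL2ν]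
    exact ENNReal.ofReal_lt_top
  have hf2integral : ∫ x, f x ^ 2 ∂ν = I := by
    rw [integral_eq_lintegral_of_nonneg_ae (Filter.Eventually.of_forall fun x => sq_nonneg _)
      hf2meas.aestronglyMeasurable, hL2ν, ENNReal.toReal_ofReal hI0.le]
  -- equality forces f constant
  have hconst_of_eq : eLpNorm f p ν = eLpNorm κ 2 μ → ∀ᵐ x ∂ν, f x = Real.sqrt I := by
    intro heq
    rw [hκ2] at heq
    have hf2const : ∀ᵐ x ∂ν, f x ^ 2 = I := by
      by_cases hptop : p = ⊤
      · -- case p = ∞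
        rw [hptop, eLpNorm_exponent_top] at heq
        have hb : ∀ᵐ x ∂ν, f x ≤ Real.sqrt I := by
          filter_upwards [ae_le_eLpNormEssSup (f := f) (μ := ν)] with x hx
          rw [heq, Real.enorm_eq_ofReal (hfnn x)] at hx
          exact (ENNReal.ofReal_le_ofReal_iff hsqnn).mp hx
        have hb2 : ∀ᵐ x ∂ν, f x ^ 2 ≤ I := by
          filter_upwards [hb] with x hx
          calc f x ^ 2 ≤ Real.sqrt I ^ 2 := pow_le_pow_left₀ (hfnn x) hx 2
            _ = I := Real.sq_sqrt hI0.le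
        have hgint : Integrable (fun x => I - f x ^ 2) ν := (integrable_const I).sub hf2int
        have hzero : ∫ x, (I - f x ^ 2) ∂ν = 0 := by
          rw [integral_sub (integrable_const I) hf2int, hf2integral, integral_const]
          simp
        have hae0 := (integral_eq_zero_iff_of_nonneg_ae
          (by filter_upwards [hb2] with x hx; simp; linarith) hgint).mp hzero
        filter_upwards [hae0] with x hx
        have : I - f x ^ 2 = 0 := hx
        linarith
      · -- case p < ∞ : strict Jensen
        have hpt : (2:ℝ) < p.toReal := by
          have := (ENNReal.toReal_lt_toReal ENNReal.ofNat_ne_top hptop).mpr hp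
          simpa using this
        set t : ℝ := p.toReal with htdef
        have ht0 : (0:ℝ) < t := by linarith
        set q : ℝ := t / 2 with hqdef
        have hq1 : (1:ℝ) < q := by rw [hqdef]; linarith
        have hq0 : (0:ℝ) ≤ q := by linarith
        rw [eLpNorm_eq_lintegral_rpow_enorm_toReal hp0 hptop] at heq
        have hA : ∫⁻ x, ‖f x‖ₑ ^ t ∂ν = ENNReal.ofReal (Real.sqrt I) ^ t := by
          rw [← heq, ← ENNReal.rpow_mul, one_div, inv_mul_cancel₀ ht0.ne', ENNReal.rpow_one]
        have hconstpow : ENNReal.ofReal (Real.sqrt I) ^ t = ENNReal.ofReal (I ^ q) := by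
          rw [ENNReal.ofReal_rpow_of_nonneg hsqnn ht0.le]
          congr 1
          rw [Real.sqrt_eq_rpow, ← Real.rpow_mul hI0.le]
          congr 1
          rw [hqdef]; ring
        have hpw : ∀ x, ‖f x‖ₑ ^ t = ENNReal.ofReal ((f x ^ 2) ^ q) := by
          intro x
          rw [Real.enorm_eq_ofReal (hfnn x), ENNReal.ofReal_rpow_of_nonneg (hfnn x) ht0.le]
          congr 1
          rw [← Real.rpow_natCast (f x) 2, ← Real.rpow_mul (hfnn x)]
          congr 1
          rw [hqdef]; push_cast; ring
        have hB : ∫⁻ x, ENNReal.ofReal ((f x ^ 2) ^ q) ∂ν = ENNReal.ofReal (I ^ q) := by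
          simp_rw [← hpw]; rw [hA, hconstpow]
        have hqmeas : Measurable fun x => (f x ^ 2) ^ q :=
          (Real.continuous_rpow_const hq0).measurable.comp hf2meas
        have hqnn : ∀ x, (0:ℝ) ≤ (f x ^ 2) ^ q := fun x => Real.rpow_nonneg (sq_nonneg _) q
        have hqint : Integrable (fun x => (f x ^ 2) ^ q) ν := by
          refine ⟨hqmeas.aestronglyMeasurable, ?_⟩
          rw [hasFiniteIntegral_iff_ofReal (Filter.Eventually.of_forall hqnn), hB]
          exact ENNReal.ofReal_lt_top
        have hqintegral : ∫ x, (f x ^ 2) ^ q ∂ν = I ^ q := by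
          rw [integral_eq_lintegral_of_nonneg_ae (Filter.Eventually.of_forall hqnn)
            hqmeas.aestronglyMeasurable, hB,
            ENNReal.toReal_ofReal (Real.rpow_nonneg hI0.le q)]
        rcases (strictConvexOn_rpow hq1).ae_eq_const_or_map_average_lt
            (Real.continuous_rpow_const hq0).continuousOn isClosed_Ici
            (Filter.Eventually.of_forall fun x => Set.mem_Ici.mpr (sq_nonneg (f x)))
            hf2int hqint
            with hc | hlt
        · have havg : (⨍ x, f x ^ 2 ∂ν) = I := by rw [average_eq_integral, hf2integral]
          filter_upwards [hc] with x hx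
          simpa [havg] using hx
        · exfalso
          rw [average_eq_integral, average_eq_integral, hf2integral] at hlt
          rw [hqintegral] at hlt
          exact lt_irrefl _ hlt
    filter_upwards [hf2const] with x hx
    rw [← Real.sqrt_sq (hfnn x), hx]
  refine ⟨hineq, ⟨?_, ?_⟩, hpart3⟩
  · intro heq
    have hconst := haemp (hconst_of_eq heq)
    have hboth : ∀ᵐ x ∂μ, 0 < κ x ∧ w x = κ x ^ 2 / I := by
      filter_upwards [hconst, hwpos] with x hfx hwx
      have hsw : Real.sqrt (w x) ≠ 0 := (Real.sqrt_pos.mpr hwx).ne'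
      rw [hfdef] at hfx
      simp only at hfx
      rw [div_eq_iff hsw] at hfx
      have hκx : κ x = Real.sqrt I * Real.sqrt (w x) := by rw [hfx]
      have hκposx : 0 < κ x := by
        rw [hκx]; exact mul_pos (Real.sqrt_pos.mpr hI0) (Real.sqrt_pos.mpr hwx)
      refine ⟨hκposx, ?_⟩
      rw [hκx, mul_pow, Real.sq_sqrt hI0.le, Real.sq_sqrt hwx.le]
      field_simp
    exact ⟨hboth.mono fun x h => h.1, hboth.mono fun x h => h.2⟩
  · intro hcond
    have hconst := haepm (hpart3 hcond)
    calc eLpNorm f p ν = eLpNorm (fun _ => Real.sqrt I) p ν := eLpNorm_congr_ae hconst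
      _ = ENNReal.ofReal (Real.sqrt I) := by
          rw [eLpNorm_const _ hp0 (IsProbabilityMeasure.ne_zero ν)]
          simp [Real.enorm_eq_ofReal hsqnn]
      _ = eLpNorm κ 2 μ := hκ2.symm
end
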